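/- (Proposition) Let X_1, X_2, … be i.i.d. random variables with distribution N(0,1). Then, almost surely, the posterior probability p(T_n = 1 | X_1,…,X_n) under the standard normal Dirichlet process mixture with concentration parameter α = 1 does not converge to 1 as n → ∞; indeed, almost surely, limsup_{n→∞} p(T_n = 1 | X_1,…,X_n) ≤ 1 / (1 + 1/(2√2)) < 1. -/

import Mathlib

open MeasureTheory Filter Finset

/-- The standard normal density `φ(u) = (2π)^{-1/2} exp(-u²/2)`. -/
noncomputable def stdNormalPDF (u : ℝ) : ℝ :=
  (Real.sqrt (2 * Real.pi))⁻¹ * Real.exp (-u ^ 2 / 2)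

/-- The single-cluster marginal `m(x_S)` of a unit-variance normal component with
standard normal prior on the mean, in closed form. -/
noncomputable def clusterMarginal {n : ℕ} (x : Fin n → ℝ) (S : Finset (Fin n)) : ℝ :=
  (Real.sqrt (S.card + 1))⁻¹ * (∏ j ∈ S, stdNormalPDF (x j)) *
    Real.exp ((∑ j ∈ S, x j) ^ 2 / (2 * (S.card + 1)))

/-- The set `𝒜_t(n)` of ordered partitions `(A_1, …, A_t)` of `{1,…,n}` into `t`
nonempty disjoint sets. -/
def orderedPartitions (n t : ℕ) : Finset (Fin t → Finset (Fin n)) :=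
  Finset.univ.filter fun A =>
    (∀ i, (A i).Nonempty) ∧ (∀ i j, i ≠ j → Disjoint (A i) (A j)) ∧
      Finset.univ.biUnion A = Finset.univ

/-- The CRP (α = 1) weight `p(A) = (1/(n!·t!)) ∏_i (|A_i| - 1)!` of an ordered partition
of `{1,…,n}` into `t` parts. -/
noncomputable def crpWeight {n t : ℕ} (A : Fin t → Finset (Fin n)) : ℝ :=
  (1 / ((n.factorial : ℝ) * (t.factorial : ℝ))) * ∏ i, (((A i).card - 1).factorial : ℝ)

/-- The joint law of the data and the number of clusters under the standard normal DPM
with concentration parameter `α = 1`: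
`p(x, T_n = t) = ∑_{A ∈ 𝒜_t(n)} p(A) ∏_i m(x_{A_i})`. -/
noncomputable def pJoint (n t : ℕ) (x : Fin n → ℝ) : ℝ :=
  ∑ A ∈ orderedPartitions n t, crpWeight A * ∏ i, clusterMarginal x (A i)

/-- The posterior probability of one cluster,
`p(T_n = 1 | x) = p(x, T_n = 1) / ∑_{t=1}^n p(x, T_n = t)`. -/
noncomputable def posteriorOne (n : ℕ) (x : Fin n → ℝ) : ℝ :=
  pJoint n 1 x / ∑ t ∈ Finset.Icc 1 n, pJoint n t x

lemma stdNormalPDF_pos (u : ℝ) : 0 < stdNormalPDF u := by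
  have h : 0 < Real.sqrt (2 * Real.pi) := Real.sqrt_pos.2 (by positivity)
  exact mul_pos (inv_pos.2 h) (Real.exp_pos _)

lemma clusterMarginal_pos {n : ℕ} (x : Fin n → ℝ) (S : Finset (Fin n)) :
    0 < clusterMarginal x S := by
  have h : (0:ℝ) < Real.sqrt (S.card + 1) := Real.sqrt_pos.2 (by positivity)
  exact mul_pos (mul_pos (inv_pos.2 h)
    (Finset.prod_pos fun j _ => stdNormalPDF_pos _)) (Real.exp_pos _)

lemma crpWeight_pos {n t : ℕ} (A : Fin t → Finset (Fin n)) : 0 < crpWeight A := by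
  unfold crpWeight
  have h1 : (0:ℝ) < (n.factorial : ℝ) * (t.factorial : ℝ) := by positivity
  exact mul_pos (by positivity) (Finset.prod_pos fun i _ => by positivity)

lemma pJoint_nonneg (n t : ℕ) (x : Fin n → ℝ) : 0 ≤ pJoint n t x :=
  Finset.sum_nonneg fun A _ => mul_nonneg (crpWeight_pos A).le
    (Finset.prod_nonneg fun i _ => (clusterMarginal_pos x (A i)).le)

lemma orderedPartitions_one {n : ℕ} (hn : 1 ≤ n) :
    orderedPartitions n 1 = {fun _ => (Finset.univ : Finset (Fin n))} := by
  ext A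
  simp only [orderedPartitions, mem_filter, mem_univ, true_and, mem_singleton]
  have huniv : (Finset.univ : Finset (Fin 1)) = {0} := by decide
  constructor
  · rintro ⟨_, _, h3⟩
    funext i
    have hi : i = 0 := Subsingleton.elim _ _
    rw [huniv, Finset.singleton_biUnion] at h3
    rw [hi, h3]
  · rintro rfl
    refine ⟨fun i => ⟨⟨0, hn⟩, mem_univ _⟩,
      fun i j hij => absurd (Subsingleton.elim i j) hij, ?_⟩
    rw [huniv, Finset.singleton_biUnion]

lemma pJoint_one {n : ℕ} (hn : 1 ≤ n) (x : Fin n → ℝ) :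
    pJoint n 1 x = (((n - 1).factorial : ℝ) / (n.factorial : ℝ)) *
      clusterMarginal x Finset.univ := by
  rw [pJoint, orderedPartitions_one hn, Finset.sum_singleton]
  simp only [crpWeight, Finset.card_univ, Fintype.card_fin, Nat.factorial_one,
    Finset.prod_const, Fintype.card_fin, Fin.prod_univ_one]
  ring

def splitPart {n : ℕ} (p : Fin n × Bool) : Fin 2 → Finset (Fin n) :=
  if p.2 then ![{p.1}, Finset.univ.erase p.1] else ![Finset.univ.erase p.1, {p.1}]

lemma splitPart_mem {n : ℕ} (hn : 3 ≤ n) (p : Fin n × Bool) :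
    splitPart p ∈ orderedPartitions n 2 := by
  obtain ⟨j, b⟩ := p
  have hcard : (Finset.univ.erase j).card = n - 1 := by
    rw [Finset.card_erase_of_mem (mem_univ j), Finset.card_univ, Fintype.card_fin]
  have hne : (Finset.univ.erase j).Nonempty := by
    rw [← Finset.card_pos, hcard]; omega
  have hdisj : Disjoint ({j} : Finset (Fin n)) (Finset.univ.erase j) :=
    Finset.disjoint_singleton_left.2 (Finset.notMem_erase _ _)
  have hcover : ∀ a : Fin n, a ∈ ({j} : Finset (Fin n)) ∨ a ∈ Finset.univ.erase j := by
    intro a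
    by_cases h : a = j
    · exact Or.inl (by simp [h])
    · exact Or.inr (Finset.mem_erase.2 ⟨h, mem_univ a⟩)
  simp only [orderedPartitions, mem_filter, mem_univ, true_and]
  cases b <;> simp only [splitPart] <;>
  · refine ⟨?_, ?_, ?_⟩
    · intro i
      fin_cases i <;> simp [hne]
    · intro i k hik
      fin_cases i <;> fin_cases k <;> simp_all [hdisj, hdisj.symm]
    · apply Finset.eq_univ_of_forall
      intro a
      rw [Finset.mem_biUnion]
      rcases hcover a with h | h <;>
        first
          | exact ⟨0, mem_univ _, by simpa using h⟩
          | exact ⟨1, mem_univ _, by simpa using h⟩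

lemma splitPart_injective {n : ℕ} (hn : 3 ≤ n) : Function.Injective (splitPart (n := n)) := by
  rintro ⟨j, b⟩ ⟨j', b'⟩ h
  have hcard : ∀ k : Fin n, (Finset.univ.erase k).card = n - 1 := fun k => by
    rw [Finset.card_erase_of_mem (mem_univ k), Finset.card_univ, Fintype.card_fin]
  have hne : ∀ k k' : Fin n, ({k} : Finset (Fin n)) ≠ Finset.univ.erase k' := by
    intro k k' hkk'
    have := hcard k'
    rw [← hkk', Finset.card_singleton] at this
    omega
  have h0 := congrFun h 0
  have h1 := congrFun h 1
  cases b <;> cases b' <;>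
      simp only [splitPart, if_true, if_false, Bool.false_eq_true,
        Matrix.cons_val_zero, Matrix.cons_val_one, Matrix.head_cons] at h0 h1
  · rw [Finset.singleton_inj] at h1; simp [h1]
  · exact absurd h0.symm (hne j' j)
  · exact absurd h0 (hne j j')
  · rw [Finset.singleton_inj] at h0; simp [h0]

lemma pJoint_two_ge {n : ℕ} (hn : 3 ≤ n) (x : Fin n → ℝ) :
    (((n - 2).factorial : ℝ) / (n.factorial : ℝ)) *
      ∑ j, clusterMarginal x (Finset.univ.erase j) * clusterMarginal x {j}
      ≤ pJoint n 2 x := by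
  have hterm : ∀ p : Fin n × Bool,
      crpWeight (splitPart p) * ∏ i, clusterMarginal x (splitPart p i)
      = (((n - 2).factorial : ℝ) / (2 * (n.factorial : ℝ))) *
        (clusterMarginal x (Finset.univ.erase p.1) * clusterMarginal x {p.1}) := by
    rintro ⟨j, b⟩
    have hcard : (Finset.univ.erase j).card = n - 1 := by
      rw [Finset.card_erase_of_mem (mem_univ j), Finset.card_univ, Fintype.card_fin]
    have hnn : n - 1 - 1 = n - 2 := by omega
    cases b <;>
      · simp only [splitPart, if_true, if_false, Bool.false_eq_true, crpWeight,
          Fin.prod_univ_two, Matrix.cons_val_zero, Matrix.cons_val_one, Matrix.head_cons,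
          hcard, hnn, Finset.card_singleton, Nat.sub_self, Nat.factorial_zero,
          Nat.factorial_two, Nat.cast_one]
        ring
  calc (((n - 2).factorial : ℝ) / (n.factorial : ℝ)) *
      ∑ j, clusterMarginal x (Finset.univ.erase j) * clusterMarginal x {j}
      = ∑ p ∈ (Finset.univ : Finset (Fin n × Bool)),
          crpWeight (splitPart p) * ∏ i, clusterMarginal x (splitPart p i) := by
        simp only [hterm]
        rw [Finset.mul_sum, Fintype.sum_prod_type]
        refine Finset.sum_congr rfl fun j _ => ?_
        simp only [Finset.sum_const, Finset.card_univ, Fintype.card_bool, nsmul_eq_mul,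
          Nat.cast_ofNat]
        have hf : ((n.factorial : ℝ)) ≠ 0 := Nat.cast_ne_zero.2 n.factorial_pos.ne'
        field_simp
    _ = ∑ A ∈ Finset.univ.image (splitPart (n := n)),
          crpWeight A * ∏ i, clusterMarginal x (A i) := by
        rw [Finset.sum_image fun p _ q _ h => splitPart_injective hn h]
    _ ≤ pJoint n 2 x := by
        apply Finset.sum_le_sum_of_subset_of_nonneg
        · intro A hA
          rw [Finset.mem_image] at hA
          obtain ⟨p, _, rfl⟩ := hA
          exact splitPart_mem hn p
        · intro A _ _
          exact mul_nonneg (crpWeight_pos A).le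
            (Finset.prod_nonneg fun i _ => (clusterMarginal_pos x (A i)).le)

lemma exp_neg_half_ge : (1:ℝ)/2 ≤ Real.exp (-(1/2)) := by
  have h1 : Real.exp (1/2) * Real.exp (1/2) = Real.exp 1 := by
    rw [← Real.exp_add]; norm_num
  have h2 : Real.exp 1 < 2.7182818286 := Real.exp_one_lt_d9
  have h3 : 0 < Real.exp (1/2) := Real.exp_pos _
  have h4 : Real.exp (1/2) ≤ 2 := by nlinarith
  have h5 : Real.exp (-(1/2)) = (Real.exp (1/2))⁻¹ := by
    rw [← Real.exp_neg]
  rw [h5, le_inv_comm₀ (by norm_num) h3]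
  linarith

lemma exp_avg_le {n : ℕ} (hn : 0 < n) (y : Fin n → ℝ) :
    Real.exp ((∑ j, y j) / n) ≤ (∑ j, Real.exp (y j)) / n := by
  have hn' : (0:ℝ) < n := Nat.cast_pos.2 hn
  have key : ∏ j, Real.exp (y j) ^ ((1:ℝ)/(n:ℝ)) ≤ ∑ j, (1/(n:ℝ)) * Real.exp (y j) :=
    Real.geom_mean_le_arith_mean_weighted Finset.univ (fun _ => 1/(n:ℝ))
      (fun j => Real.exp (y j)) (fun i _ => by positivity)
      (by rw [Finset.sum_const, Finset.card_univ, Fintype.card_fin, nsmul_eq_mul]; field_simp)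
      (fun i _ => (Real.exp_pos _).le)
  have hL : ∏ j, Real.exp (y j) ^ ((1:ℝ)/(n:ℝ)) = Real.exp ((∑ j, y j) / n) := by
    calc ∏ j, Real.exp (y j) ^ ((1:ℝ)/(n:ℝ))
        = ∏ j, Real.exp (y j * (1/(n:ℝ))) :=
          Finset.prod_congr rfl fun j _ => (Real.exp_mul _ _).symm
      _ = Real.exp (∑ j, y j * (1/(n:ℝ))) := (Real.exp_sum _ _).symm
      _ = Real.exp ((∑ j, y j) / n) := by
          congr 1
          rw [Finset.sum_div]
          exact Finset.sum_congr rfl fun j _ => mul_one_div _ _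
  have hR : ∑ j, (1/(n:ℝ)) * Real.exp (y j) = (∑ j, Real.exp (y j)) / n := by
    rw [Finset.sum_div]
    exact Finset.sum_congr rfl fun j _ => by ring
  rw [hL, hR] at key
  exact key

lemma key_sum_ge {n : ℕ} (hn : 3 ≤ n) (x : Fin n → ℝ)
    (hs2 : (∑ j, x j) ^ 2 ≤ (n:ℝ) ^ 2 / 2) :
    1 / (2 * Real.sqrt 2) * ((n:ℝ) - 1) * clusterMarginal x Finset.univ ≤
      ∑ j, clusterMarginal x (Finset.univ.erase j) * clusterMarginal x {j} := by
  have hnR : (3:ℝ) ≤ (n:ℝ) := by exact_mod_cast hn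
  set s : ℝ := ∑ j, x j with hs
  set P : ℝ := ∏ j, stdNormalPDF (x j) with hP
  have hPpos : 0 < P := Finset.prod_pos fun j _ => stdNormalPDF_pos _
  have hm_univ : clusterMarginal x Finset.univ
      = (Real.sqrt ((n:ℝ) + 1))⁻¹ * P * Real.exp (s ^ 2 / (2 * ((n:ℝ) + 1))) := by
    simp only [clusterMarginal, Finset.card_univ, Fintype.card_fin, hs, hP]
  set y : Fin n → ℝ := fun j => (s - x j) ^ 2 / (2 * n) + (x j) ^ 2 / 4
    - s ^ 2 / (2 * ((n:ℝ) + 1)) with hy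
  have hMj : ∀ j, clusterMarginal x (Finset.univ.erase j) * clusterMarginal x {j}
      = (Real.sqrt n)⁻¹ * (Real.sqrt 2)⁻¹ * P
        * Real.exp (s ^ 2 / (2 * ((n:ℝ) + 1))) * Real.exp (y j) := by
    intro j
    have hcard : (Finset.univ.erase j).card = n - 1 := by
      rw [Finset.card_erase_of_mem (mem_univ j), Finset.card_univ, Fintype.card_fin]
    have hcast : ((n - 1 : ℕ) : ℝ) + 1 = (n : ℝ) := by
      have h1 : (1:ℕ) ≤ n := by omega
      push_cast [h1]
      ring
    have hsum : ∑ k ∈ Finset.univ.erase j, x k = s - x j := by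
      rw [hs, Finset.sum_erase_eq_sub (mem_univ j)]
    have hprod : (∏ k ∈ Finset.univ.erase j, stdNormalPDF (x k)) * stdNormalPDF (x j) = P := by
      rw [hP, Finset.prod_erase_mul _ _ (mem_univ j)]
    have e1 : Real.exp ((s - x j) ^ 2 / (2 * (n:ℝ))) * Real.exp (x j ^ 2 / 4)
        = Real.exp (s ^ 2 / (2 * ((n:ℝ) + 1))) * Real.exp (y j) := by
      simp only [hy]
      rw [← Real.exp_add, ← Real.exp_add]
      congr 1
      ring
    simp only [clusterMarginal, hcard, hcast, Finset.card_singleton, Finset.sum_singleton,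
      Finset.prod_singleton, hsum, Nat.cast_one]
    norm_num
    rw [← hprod]
    linear_combination ((Real.sqrt (n:ℝ))⁻¹ * (Real.sqrt 2)⁻¹ *
      (∏ k ∈ Finset.univ.erase j, stdNormalPDF (x k)) * stdNormalPDF (x j)) * e1
  set Q : ℝ := ∑ j, (x j) ^ 2 with hQdef
  have hQ : (0:ℝ) ≤ Q := Finset.sum_nonneg fun j _ => sq_nonneg _
  have hsum_sq : ∑ j, (s - x j) ^ 2 = (n:ℝ) * s ^ 2 - 2 * s * s + Q := by
    have h1 : ∀ j, (s - x j) ^ 2 = s ^ 2 - 2 * s * x j + (x j) ^ 2 := fun j => by ring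
    simp only [h1]
    rw [Finset.sum_add_distrib, Finset.sum_sub_distrib, Finset.sum_const, Finset.card_univ,
      Fintype.card_fin, ← Finset.mul_sum, ← hs, hQdef, nsmul_eq_mul]
  have hn0 : (n:ℝ) ≠ 0 := by linarith
  have hn1 : ((n:ℝ) + 1) ≠ 0 := by linarith
  have hsum_y : -((n:ℝ)/2) ≤ ∑ j, y j := by
    have hexp : ∑ j, y j = (∑ j, (s - x j) ^ 2) / (2 * n) + Q / 4
        - (n:ℝ) * (s ^ 2 / (2 * ((n:ℝ) + 1))) := by
      simp only [hy]
      rw [Finset.sum_sub_distrib, Finset.sum_add_distrib, Finset.sum_const, Finset.card_univ,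
        Fintype.card_fin, nsmul_eq_mul, ← Finset.sum_div, ← Finset.sum_div, hQdef]
    rw [hexp, hsum_sq, ← sub_nonneg]
    have heq : ((n:ℝ) * s ^ 2 - 2 * s * s + Q) / (2 * n) + Q / 4
        - (n:ℝ) * (s ^ 2 / (2 * ((n:ℝ) + 1))) - (-((n:ℝ)/2))
        = (-2*s^2*((n:ℝ)+2) + Q*((n:ℝ)+1)*((n:ℝ)+2) + 2*(n:ℝ)^2*((n:ℝ)+1))
          / (4 * (n:ℝ) * ((n:ℝ)+1)) := by
      field_simp
      ring
    rw [heq]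
    apply div_nonneg _ (by positivity)
    nlinarith [hs2, hQ, hnR]
  have hsum_exp : (n:ℝ) / 2 ≤ ∑ j, Real.exp (y j) := by
    have h1 : Real.exp (-(1/2)) ≤ Real.exp ((∑ j, y j) / n) := by
      apply Real.exp_le_exp.2
      rw [le_div_iff₀ (by linarith : (0:ℝ) < (n:ℝ))]
      linarith [hsum_y]
    have h2 := h1.trans (exp_avg_le (by omega) y)
    rw [le_div_iff₀ (by linarith : (0:ℝ) < (n:ℝ))] at h2
    calc (n:ℝ)/2 = (1/2) * n := by ring
      _ ≤ Real.exp (-(1/2)) * n := mul_le_mul_of_nonneg_right exp_neg_half_ge (by linarith)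
      _ ≤ ∑ j, Real.exp (y j) := h2
  have hrw : ∑ j, clusterMarginal x (Finset.univ.erase j) * clusterMarginal x {j}
      = (Real.sqrt n)⁻¹ * (Real.sqrt 2)⁻¹ * P * Real.exp (s ^ 2 / (2 * ((n:ℝ) + 1)))
        * ∑ j, Real.exp (y j) := by
    rw [Finset.mul_sum]
    exact Finset.sum_congr rfl fun j _ => hMj j
  rw [hrw, hm_univ]
  set a := Real.sqrt 2 with ha
  set b := Real.sqrt (n:ℝ) with hb
  set c := Real.sqrt ((n:ℝ) + 1) with hc
  have hapos : 0 < a := Real.sqrt_pos.2 (by norm_num)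
  have hbpos : 0 < b := Real.sqrt_pos.2 (by linarith)
  have hcpos : 0 < c := Real.sqrt_pos.2 (by linarith)
  have hbc : b ≤ c := Real.sqrt_le_sqrt (by linarith)
  set E := P * Real.exp (s ^ 2 / (2 * ((n:ℝ) + 1))) with hE
  have hEpos : 0 < E := mul_pos hPpos (Real.exp_pos _)
  have key : ((n:ℝ) - 1) * b ≤ (n:ℝ) * c := by nlinarith
  have hgoal : ((n:ℝ) - 1) * E / (2*a*c) ≤ (n:ℝ) * E / (2*a*b) := by
    rw [div_le_div_iff₀ (by positivity) (by positivity)]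
    calc ((n:ℝ) - 1) * E * (2*a*b) = (2*a*E) * (((n:ℝ)-1)*b) := by ring
      _ ≤ (2*a*E) * ((n:ℝ)*c) := mul_le_mul_of_nonneg_left key (by positivity)
      _ = (n:ℝ) * E * (2*a*c) := by ring
  calc 1 / (2 * a) * ((n:ℝ) - 1) * (c⁻¹ * P * Real.exp (s ^ 2 / (2 * ((n:ℝ) + 1))))
      = ((n:ℝ) - 1) * E / (2*a*c) := by rw [hE]; field_simp; try ring
    _ ≤ (n:ℝ) * E / (2*a*b) := hgoal
    _ = (b⁻¹ * a⁻¹ * P * Real.exp (s ^ 2 / (2 * ((n:ℝ) + 1)))) * ((n:ℝ)/2) := by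
        rw [hE]; field_simp; try ring
    _ ≤ b⁻¹ * a⁻¹ * P * Real.exp (s ^ 2 / (2 * ((n:ℝ) + 1))) * ∑ j, Real.exp (y j) :=
        mul_le_mul_of_nonneg_left hsum_exp (by positivity)

lemma posteriorOne_le {n : ℕ} (hn : 3 ≤ n) (x : Fin n → ℝ)
    (hs2 : (∑ j, x j) ^ 2 ≤ (n:ℝ) ^ 2 / 2) :
    posteriorOne n x ≤ 1 / (1 + 1 / (2 * Real.sqrt 2)) := by
  have hsqrt2 : (0:ℝ) < Real.sqrt 2 := Real.sqrt_pos.2 (by norm_num)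
  set k : ℝ := 1 / (2 * Real.sqrt 2) with hk
  have hkpos : 0 < k := by positivity
  have hfac : ((n - 1).factorial : ℝ) = ((n:ℝ) - 1) * ((n - 2).factorial : ℝ) := by
    have h1 : n - 1 = (n - 2) + 1 := by omega
    rw [h1, Nat.factorial_succ]
    push_cast
    have h2 : ((n - 2 : ℕ) : ℝ) = (n:ℝ) - 2 := by
      have : (2:ℕ) ≤ n := by omega
      push_cast [this]; ring
    rw [h2]; ring
  have hp1 : pJoint n 1 x = (((n - 1).factorial : ℝ) / (n.factorial : ℝ)) *
      clusterMarginal x Finset.univ := pJoint_one (by omega) x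
  have hp1pos : 0 < pJoint n 1 x := by
    rw [hp1]
    have := clusterMarginal_pos x (Finset.univ : Finset (Fin n))
    have := Nat.factorial_pos (n - 1)
    have := Nat.factorial_pos n
    positivity
  have hp2 : k * pJoint n 1 x ≤ pJoint n 2 x := by
    refine le_trans ?_ (pJoint_two_ge hn x)
    have h1 := key_sum_ge hn x hs2
    have h2 : (0:ℝ) ≤ ((n - 2).factorial : ℝ) / (n.factorial : ℝ) := by positivity
    calc k * pJoint n 1 x
        = (((n - 2).factorial : ℝ) / (n.factorial : ℝ)) *
            (k * ((n:ℝ) - 1) * clusterMarginal x Finset.univ) := by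
          rw [hp1, hfac]; ring
      _ ≤ (((n - 2).factorial : ℝ) / (n.factorial : ℝ)) *
            ∑ j, clusterMarginal x (Finset.univ.erase j) * clusterMarginal x {j} :=
          mul_le_mul_of_nonneg_left h1 h2
  have hp2pos : 0 < pJoint n 2 x := lt_of_lt_of_le (by positivity) hp2
  have hD : pJoint n 1 x + pJoint n 2 x ≤ ∑ t ∈ Finset.Icc 1 n, pJoint n t x := by
    have hsub : ({1, 2} : Finset ℕ) ⊆ Finset.Icc 1 n := by
      intro t ht
      simp only [Finset.mem_insert, Finset.mem_singleton] at ht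
      rcases ht with rfl | rfl <;> simp [Finset.mem_Icc] <;> omega
    have := Finset.sum_le_sum_of_subset_of_nonneg hsub
      (fun t _ _ => pJoint_nonneg n t x)
    rwa [Finset.sum_pair (by norm_num : (1:ℕ) ≠ 2)] at this
  have hDpos : 0 < ∑ t ∈ Finset.Icc 1 n, pJoint n t x :=
    lt_of_lt_of_le (by linarith) hD
  rw [posteriorOne]
  calc pJoint n 1 x / ∑ t ∈ Finset.Icc 1 n, pJoint n t x
      ≤ pJoint n 1 x / (pJoint n 1 x + pJoint n 2 x) :=
        div_le_div_of_nonneg_left hp1pos.le (by linarith) hD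
    _ ≤ 1 / (1 + k) := by
        rw [div_le_div_iff₀ (by linarith) (by linarith)]
        calc pJoint n 1 x * (1 + k) = pJoint n 1 x + k * pJoint n 1 x := by ring
          _ ≤ pJoint n 1 x + pJoint n 2 x := by linarith
          _ = 1 * (pJoint n 1 x + pJoint n 2 x) := by ring

lemma posteriorOne_nonneg (n : ℕ) (x : Fin n → ℝ) : 0 ≤ posteriorOne n x :=
  div_nonneg (pJoint_nonneg n 1 x) (Finset.sum_nonneg fun t _ => pJoint_nonneg n t x)

lemma integrable_id_gaussian :
    Integrable (fun x : ℝ => x) (ProbabilityTheory.gaussianReal 0 1) := by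
  rw [ProbabilityTheory.gaussianReal_of_var_ne_zero 0 one_ne_zero]
  rw [MeasureTheory.integrable_withDensity_iff (ProbabilityTheory.measurable_gaussianPDF 0 1)
    (Eventually.of_forall fun x => ENNReal.ofReal_lt_top)]
  have heq : ∀ x : ℝ, x * (ProbabilityTheory.gaussianPDF 0 1 x).toReal
      = (Real.sqrt (2 * Real.pi))⁻¹ * (x * Real.exp (-(2⁻¹) * x ^ 2)) := by
    intro x
    rw [ProbabilityTheory.gaussianPDF,
      ENNReal.toReal_ofReal (ProbabilityTheory.gaussianPDFReal_nonneg _ _ _),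
      ProbabilityTheory.gaussianPDFReal]
    push_cast
    norm_num
    ring_nf
  simp only [heq]
  exact (integrable_mul_exp_neg_mul_sq (by norm_num : (0:ℝ) < 2⁻¹)).const_mul _

lemma integral_id_gaussian :
    ∫ x, x ∂(ProbabilityTheory.gaussianReal 0 1) = 0 := by
  have hmap : (ProbabilityTheory.gaussianReal 0 1).map (fun x : ℝ => (-1) * x)
      = ProbabilityTheory.gaussianReal 0 1 := by
    rw [show (fun x : ℝ => (-1) * x) = ((-1 : ℝ) * ·) from rfl,
      ProbabilityTheory.gaussianReal_map_const_mul (-1)]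
    norm_num
  have h1 : ∫ x, x ∂(ProbabilityTheory.gaussianReal 0 1)
      = ∫ x : ℝ, -x ∂(ProbabilityTheory.gaussianReal 0 1) := by
    have h1' := MeasureTheory.integral_map (μ := ProbabilityTheory.gaussianReal 0 1)
      (φ := fun x : ℝ => (-1:ℝ) * x)
      ((by fun_prop : Measurable fun x : ℝ => (-1:ℝ) * x).aemeasurable)
      (f := fun x : ℝ => x) aestronglyMeasurable_id
    rw [hmap] at h1'
    simpa using h1'
  have h2 : ∫ x : ℝ, -x ∂(ProbabilityTheory.gaussianReal 0 1)
      = - ∫ x, x ∂(ProbabilityTheory.gaussianReal 0 1) := integral_neg _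
  linarith [h1, h2.symm ▸ h1]

/-- (Proposition) If `X₁, X₂, …` are i.i.d. `N(0,1)`, then almost surely the posterior
probability `p(T_n = 1 | X_{1:n})` under the standard normal DPM with `α = 1` does not
converge to `1`; indeed, almost surely
`limsup_n p(T_n = 1 | X_{1:n}) ≤ 1/(1 + 1/(2√2)) < 1`. -/
theorem posterior_one_not_consistent {Ω : Type*} [MeasurableSpace Ω]
    (μ : Measure Ω) [IsProbabilityMeasure μ] (X : ℕ → Ω → ℝ)
    (hmeas : ∀ i, Measurable (X i))
    (hindep : ProbabilityTheory.iIndepFun X μ)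
    (hdist : ∀ i, Measure.map (X i) μ = ProbabilityTheory.gaussianReal 0 1) :
    1 / (1 + 1 / (2 * Real.sqrt 2)) < 1 ∧
    ∀ᵐ ω ∂μ,
      ¬ Tendsto (fun n : ℕ => posteriorOne n fun i : Fin n => X i ω) atTop (nhds 1) ∧
      Filter.limsup (fun n : ℕ => posteriorOne n fun i : Fin n => X i ω) atTop ≤
        1 / (1 + 1 / (2 * Real.sqrt 2)) := by

  have hsqrt2 : (0:ℝ) < Real.sqrt 2 := Real.sqrt_pos.2 (by norm_num)
  have hkpos : (0:ℝ) < 1 / (2 * Real.sqrt 2) := by positivity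
  have hBlt1 : 1 / (1 + 1 / (2 * Real.sqrt 2)) < 1 := by
    rw [div_lt_one (by linarith)]
    linarith
  refine ⟨hBlt1, ?_⟩
  -- strong law of large numbers
  have hint : Integrable (X 0) μ := by
    have h1 : Integrable (fun x : ℝ => x) (μ.map (X 0)) := by
      rw [hdist 0]; exact integrable_id_gaussian
    exact (integrable_map_measure aestronglyMeasurable_id
      (hmeas 0).aemeasurable).1 h1
  have hmean : ∫ ω, X 0 ω ∂μ = 0 := by
    have h1 : ∫ ω, X 0 ω ∂μ = ∫ x, x ∂(μ.map (X 0)) :=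
      (integral_map (hmeas 0).aemeasurable aestronglyMeasurable_id).symm
    rw [h1, hdist 0]
    exact integral_id_gaussian
  have hident : ∀ i, ProbabilityTheory.IdentDistrib (X i) (X 0) μ μ := fun i =>
    ⟨(hmeas i).aemeasurable, (hmeas 0).aemeasurable, by rw [hdist i, hdist 0]⟩
  have hslln := ProbabilityTheory.strong_law_ae_real X hint
    (fun i j hij => hindep.indepFun hij) hident
  rw [hmean] at hslln
  filter_upwards [hslln] with ω hω
  have hev : ∀ᶠ n : ℕ in atTop,
      posteriorOne n (fun i : Fin n => X i ω) ≤ 1 / (1 + 1 / (2 * Real.sqrt 2)) := by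
    have h1 : ∀ᶠ n : ℕ in atTop, (∑ i ∈ Finset.range n, X i ω) / n ∈ Metric.ball (0:ℝ) (1/2) :=
      hω.eventually (Metric.ball_mem_nhds (0:ℝ) one_half_pos)
    filter_upwards [h1, eventually_ge_atTop 3] with n h2 h3
    apply posteriorOne_le h3
    have hnpos : (0:ℝ) < (n:ℝ) := by
      have : (3:ℝ) ≤ (n:ℝ) := by exact_mod_cast h3
      linarith
    rw [Fin.sum_univ_eq_sum_range (fun i => X i ω) n]
    set sn := ∑ i ∈ Finset.range n, X i ω with hsn
    rw [Metric.mem_ball, Real.dist_eq, sub_zero] at h2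
    have habs := abs_lt.1 h2
    have hd : sn = (sn / n) * n := by field_simp
    rw [hd]
    calc ((sn / n) * n) ^ 2 = (sn/n)^2 * (n:ℝ)^2 := by ring
      _ ≤ (1/4) * (n:ℝ)^2 := by
          have hq2 : (sn/(n:ℝ))^2 ≤ 1/4 := by nlinarith [habs.1, habs.2]
          nlinarith [hq2, sq_nonneg (n:ℝ)]
      _ ≤ (n:ℝ)^2 / 2 := by nlinarith
  constructor
  · intro hcont
    have h2 : ∀ᶠ n : ℕ in atTop, 1 / (1 + 1 / (2 * Real.sqrt 2)) <
        posteriorOne n (fun i : Fin n => X i ω) :=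
      hcont.eventually (eventually_gt_nhds hBlt1)
    obtain ⟨n, h1', h2'⟩ := (hev.and h2).exists
    linarith
  · exact Filter.limsup_le_of_le (Filter.isCoboundedUnder_le_of_le atTop
      (fun n => posteriorOne_nonneg n _)) hev
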